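/- Consider finitely many points $c_1, \ldots, c_n$ in the plane with associated radii $r_i > 0$ and powers $0 \leq p_i \leq r_i^{\alpha}$, where $\alpha > 2$, $\gamma > 1$, $r_i \leq r_n$ for all $i$, the disks of radii $r_i$ around $c_i$ are pairwise disjoint, and $\mathrm{dist}(c_i, c_j) \geq \gamma (r_i + r_j)$ for $i \neq j$. If at some point $q$ with $\mathrm{dist}(c_n, q) = r_n$ the total received power $\sum_{i=1}^{n} p_i / \mathrm{dist}(c_i, q)^{\alpha} \geq 1$, then $p_n \geq (1 - \beta_2) r_n^{\alpha}$, where $\beta_2 = \frac{1}{(\alpha - 2)\, \gamma^{\alpha - 2}} \left( \frac{\gamma (2\gamma + 1)}{(\gamma - 1)(2\gamma - 1)} \right)^{\alpha}$. -/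

import Mathlib

open Real MeasureTheory Metric Set
open scoped ENNReal NNReal





lemma annulus_bound (α R : ℝ) (hα : 2 < α) (hR : 0 < R) (z : EuclideanSpace ℝ (Fin 2)) :
    ∫⁻ x in {x | R ≤ dist x z}, ENNReal.ofReal (dist x z ^ (-α)) ≤
      ENNReal.ofReal (2 * π * R ^ (2 - α) / (α - 2)) := by
  have hα0 : (0:ℝ) < α := by linarith
  have hαne : α ≠ 0 := ne_of_gt hα0
  set T : ℝ := R ^ (-α) with hTdef
  have hT0 : 0 < T := Real.rpow_pos_of_pos hR _
  have hvol : ∀ (s : ℝ), 0 ≤ s →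
      volume (ball z s) = ENNReal.ofReal (π * s ^ 2) := by
    intro s hs
    rw [EuclideanSpace.volume_ball, Fintype.card_fin]
    norm_num
    rw [← ENNReal.ofReal_pow (Real.sqrt_nonneg _), Real.sq_sqrt pi_pos.le, ← ENNReal.ofReal_pow hs,
      ← ENNReal.ofReal_mul (by positivity), mul_comm]
  have hA : MeasurableSet {x : EuclideanSpace ℝ (Fin 2) | R ≤ dist x z} :=
    (isClosed_le continuous_const (continuous_id.dist continuous_const)).measurableSet
  have hmf : Measurable fun x : EuclideanSpace ℝ (Fin 2) => dist x z ^ (-α) := by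
    fun_prop
  rw [lintegral_eq_lintegral_meas_lt _
      (ae_of_all _ fun x => Real.rpow_nonneg dist_nonneg _) hmf.aemeasurable]
  -- comparator function
  set g : ℝ → ℝ := fun t => π * (t ^ (-(2 * α⁻¹)) - R ^ 2) with hgdef
  have hmeas_bound : ∀ t ∈ Ioi (0:ℝ),
      (volume.restrict {x : EuclideanSpace ℝ (Fin 2) | R ≤ dist x z})
        {a | t < dist a z ^ (-α)} ≤ ENNReal.ofReal (g t) := by
    intro t ht
    have ht0 : (0:ℝ) < t := ht
    set s : ℝ := t ^ (-α⁻¹) with hsdef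
    have hs0 : 0 < s := Real.rpow_pos_of_pos ht0 _
    have hss : s ^ (-α) = t := by
      rw [hsdef, ← Real.rpow_mul ht0.le, show (-α⁻¹) * (-α) = 1 by field_simp, Real.rpow_one]
    have hs2 : s ^ 2 = t ^ (-(2 * α⁻¹)) := by
      rw [hsdef, ← Real.rpow_natCast (t ^ (-α⁻¹)) 2, ← Real.rpow_mul ht0.le]
      norm_num
      ring_nf
    rw [Measure.restrict_apply' hA]
    have hsub : {a : EuclideanSpace ℝ (Fin 2) | t < dist a z ^ (-α)} ∩
        {x | R ≤ dist x z} ⊆ ball z s \ ball z R := by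
      rintro x ⟨hx1, hx2⟩
      refine ⟨?_, fun hx3 => absurd (mem_ball.mp hx3) (not_lt.mpr hx2)⟩
      rw [mem_ball]
      by_contra hcon
      push_neg at hcon
      have hxpos : 0 < dist x z := lt_of_lt_of_le hR hx2
      have : dist x z ^ (-α) ≤ s ^ (-α) :=
        Real.rpow_le_rpow_of_nonpos hs0 hcon (by linarith)
      rw [hss] at this
      exact absurd hx1 (not_lt.mpr this)
    refine le_trans (measure_mono hsub) ?_
    rcases le_or_gt R s with hRs | hRs
    · rw [measure_diff (ball_subset_ball hRs) measurableSet_ball.nullMeasurableSet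
        (by rw [hvol R hR.le]; exact ENNReal.ofReal_lt_top.ne),
        hvol s hs0.le, hvol R hR.le, hgdef]
      rw [← ENNReal.ofReal_sub _ (by positivity)]
      apply ENNReal.ofReal_le_ofReal
      refine le_of_eq ?_
      show π * s ^ 2 - π * R ^ 2 = π * (t ^ (-(2 * α⁻¹)) - R ^ 2)
      rw [← hs2]; ring
    · have : ball z s \ ball z R = ∅ := by
        apply diff_eq_empty.mpr
        exact ball_subset_ball hRs.le
      rw [this]
      simp
  calc ∫⁻ t in Ioi (0:ℝ), (volume.restrict {x : EuclideanSpace ℝ (Fin 2) | R ≤ dist x z})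
        {a | t < dist a z ^ (-α)}
      ≤ ∫⁻ t in Ioi (0:ℝ), ENNReal.ofReal (g t) := by
        exact setLIntegral_mono' measurableSet_Ioi hmeas_bound
    _ = (∫⁻ t in Ioc (0:ℝ) T, ENNReal.ofReal (g t)) + ∫⁻ t in Ioi T, ENNReal.ofReal (g t) := by
        rw [← lintegral_union measurableSet_Ioi (Ioc_disjoint_Ioi le_rfl),
          Ioc_union_Ioi_eq_Ioi hT0.le]
    _ = (∫⁻ t in Ioc (0:ℝ) T, ENNReal.ofReal (g t)) + 0 := by
        congr 1
        have hzero : ∀ t ∈ Ioi T, ENNReal.ofReal (g t) = (fun _ : ℝ => (0:ℝ≥0∞)) t := by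
          intro t ht
          have ht0 : 0 < t := lt_trans hT0 ht
          have hexp : -(2*α⁻¹) < 0 := by
            have : (0:ℝ) < 2 * α⁻¹ := by positivity
            linarith
          have h1 : t ^ (-(2*α⁻¹)) < T ^ (-(2*α⁻¹)) :=
            Real.rpow_lt_rpow_of_neg hT0 ht hexp
          have h2 : T ^ (-(2*α⁻¹)) = R ^ 2 := by
            rw [hTdef, ← Real.rpow_mul hR.le,
              show (-α * -(2*α⁻¹)) = ((2:ℕ):ℝ) by push_cast; field_simp,
              Real.rpow_natCast]
          show ENNReal.ofReal (g t) = 0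
          rw [ENNReal.ofReal_eq_zero, hgdef]
          nlinarith [pi_pos]
        rw [setLIntegral_congr_fun measurableSet_Ioi hzero, lintegral_zero]
    _ = (∫⁻ t in Ioc (0:ℝ) T, ENNReal.ofReal (g t)) := add_zero _
    _ ≤ ENNReal.ofReal (2 * π * R ^ (2 - α) / (α - 2)) := by
        have hexp' : (-1:ℝ) < -(2*α⁻¹) := by
          rw [neg_lt_neg_iff]
          rw [show (1:ℝ) = α * α⁻¹ by rw [mul_inv_cancel₀ hαne]]
          have hinv : (0:ℝ) < α⁻¹ := by positivity
          nlinarith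
        have hT2 : T ^ (-(2*α⁻¹)) = R ^ 2 := by
          rw [hTdef, ← Real.rpow_mul hR.le,
            show (-α * -(2*α⁻¹)) = ((2:ℕ):ℝ) by push_cast; field_simp,
            Real.rpow_natCast]
        have hint : IntegrableOn g (Ioc (0:ℝ) T) := by
          have h1 : IntegrableOn (fun t : ℝ => t ^ (-(2*α⁻¹))) (Ioc (0:ℝ) T) :=
            (intervalIntegral.intervalIntegrable_rpow' hexp').1
          exact (h1.sub (integrableOn_const measure_Ioc_lt_top.ne)).const_mul π
        have hnn : 0 ≤ᵐ[volume.restrict (Ioc (0:ℝ) T)] g := by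
          refine (ae_restrict_iff' measurableSet_Ioc).2 (ae_of_all _ fun t ht => ?_)
          have h3 : T ^ (-(2*α⁻¹)) ≤ t ^ (-(2*α⁻¹)) := by
            apply Real.rpow_le_rpow_of_nonpos ht.1 ht.2
            have : (0:ℝ) < 2 * α⁻¹ := by positivity
            linarith
          rw [hT2] at h3
          have : 0 ≤ t ^ (-(2*α⁻¹)) - R ^ 2 := by linarith
          rw [hgdef]
          positivity
        rw [← ofReal_integral_eq_lintegral_ofReal hint hnn]
        apply ENNReal.ofReal_le_ofReal
        refine le_of_eq ?_
        rw [← intervalIntegral.integral_of_le hT0.le]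
        have : (fun t : ℝ => g t) = fun t : ℝ => π * (t ^ (-(2*α⁻¹)) - R ^ 2) := rfl
        rw [hgdef]
        rw [intervalIntegral.integral_const_mul]
        rw [intervalIntegral.integral_sub (intervalIntegral.intervalIntegrable_rpow' hexp')
          intervalIntegrable_const]
        rw [integral_rpow (Or.inl hexp'), intervalIntegral.integral_const]
        have hc : -(2*α⁻¹) + 1 = (α - 2)/α := by field_simp; ring
        have hzr : (0:ℝ) ^ (-(2*α⁻¹) + 1) = 0 := by
          apply Real.zero_rpow
          rw [hc]
          exact div_ne_zero (by linarith) (by linarith)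
        have e1 : T ^ (-(2*α⁻¹) + 1) = R ^ (2 - α) := by
          rw [hTdef, ← Real.rpow_mul hR.le]
          congr 1
          field_simp
          ring
        have e2 : T * R ^ 2 = R ^ (2 - α) := by
          rw [hTdef, show (R:ℝ)^2 = R ^ ((2:ℕ):ℝ) from (Real.rpow_natCast R 2).symm,
            ← Real.rpow_add hR]
          norm_num
          congr 1
          ring
        rw [hzr, e1, sub_zero, sub_zero, smul_eq_mul, e2, hc]
        have hα2 : α - 2 ≠ 0 := by linarith
        field_simp
        ring




lemma aux_term (α p ri rn d D c1 c2 κ k : ℝ) (hα : 2 < α)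
    (hri : 0 < ri) (hrn : 0 < rn) (hκ0 : 0 < κ) (hc10 : 0 < c1) (hc20 : 0 < c2)
    (hp1 : p ≤ ri ^ α) (hrirn : ri ≤ rn)
    (hdD : D ≤ c1 * d) (hDκ : D + κ * ri ≤ c2 * D)
    (hdpos : 0 < d) (hDpos : 0 < D)
    (hk : k = c1 ^ α * c2 ^ α * rn ^ (α - 2) / (π * κ ^ 2)) :
    p / d ^ α ≤ k * (π * κ ^ 2 * ri ^ 2) * (D + κ * ri) ^ (-α) := by
  have hDκpos : 0 < D + κ * ri := by positivity
  have hdα : 0 < d ^ α := Real.rpow_pos_of_pos hdpos _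
  have hDκα : 0 < (D + κ * ri) ^ α := Real.rpow_pos_of_pos hDκpos _
  rw [Real.rpow_neg hDκpos.le]
  rw [show k * (π * κ ^ 2 * ri ^ 2) * ((D + κ * ri) ^ α)⁻¹
      = (k * (π * κ ^ 2 * ri ^ 2)) / ((D + κ * ri) ^ α) by ring]
  rw [div_le_div_iff₀ hdα hDκα]
  have h1 : p ≤ rn ^ (α - 2) * ri ^ 2 := by
    have e1 : ri ^ α = ri ^ (α - 2) * ri ^ 2 := by
      rw [show (ri : ℝ)^2 = ri ^ ((2:ℕ):ℝ) from (Real.rpow_natCast _ 2).symm,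
        ← Real.rpow_add hri]
      norm_num
    have e2 : ri ^ (α - 2) ≤ rn ^ (α - 2) :=
      Real.rpow_le_rpow hri.le hrirn (by linarith)
    nlinarith [Real.rpow_nonneg hri.le (α-2), sq_nonneg ri]
  have h2 : (D + κ * ri) ^ α ≤ c2 ^ α * D ^ α := by
    rw [← Real.mul_rpow hc20.le hDpos.le]
    exact Real.rpow_le_rpow hDκpos.le hDκ (by linarith)
  have h3 : D ^ α ≤ c1 ^ α * d ^ α := by
    rw [← Real.mul_rpow hc10.le hdpos.le]
    exact Real.rpow_le_rpow hDpos.le hdD (by linarith)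
  have hrnα2 : (0:ℝ) < rn ^ (α - 2) := Real.rpow_pos_of_pos hrn _
  have hc1α : (0:ℝ) < c1 ^ α := Real.rpow_pos_of_pos hc10 _
  have hc2α : (0:ℝ) < c2 ^ α := Real.rpow_pos_of_pos hc20 _
  have h4 : p * (D + κ * ri) ^ α ≤
      (rn ^ (α - 2) * ri ^ 2) * (c2 ^ α * (c1 ^ α * d ^ α)) := by
    calc p * (D + κ * ri) ^ α
        ≤ (rn ^ (α - 2) * ri ^ 2) * (D + κ * ri) ^ α :=
          mul_le_mul_of_nonneg_right h1 (Real.rpow_nonneg hDκpos.le _)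
      _ ≤ (rn ^ (α - 2) * ri ^ 2) * (c2 ^ α * D ^ α) := by
          apply mul_le_mul_of_nonneg_left h2
          positivity
      _ ≤ (rn ^ (α - 2) * ri ^ 2) * (c2 ^ α * (c1 ^ α * d ^ α)) := by
          apply mul_le_mul_of_nonneg_left
          · exact mul_le_mul_of_nonneg_left h3 hc2α.le
          · positivity
  refine le_trans h4 (le_of_eq ?_)
  rw [hk]
  have hπ : (0:ℝ) < π := pi_pos
  field_simp

lemma aux_ratio (α γ κ c1 c2 : ℝ) (hα : 2 < α) (hγ : 1 < γ)
    (hκdef : κ = 2 * γ / (γ + 1)) (hc1def : c1 = γ / (γ - 1))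
    (hc2def : c2 = (2 * γ + κ) / (2 * γ)) :
    c1 ^ α * c2 ^ α * 2 ≤ κ ^ 2 *
      ((γ * (2 * γ + 1)) / ((γ - 1) * (2 * γ - 1))) ^ α := by
  have hγ0 : (0:ℝ) < γ := by linarith
  have hκ0 : 0 < κ := by rw [hκdef]; positivity
  have hc10 : 0 < c1 := by rw [hc1def]; exact div_pos (by linarith) (by linarith)
  have hc20 : 0 < c2 := by rw [hc2def]; exact div_pos (by linarith) (by linarith)
  obtain ⟨M, hMdef⟩ : ∃ M : ℝ, M = (γ * (2 * γ + 1)) / ((γ - 1) * (2 * γ - 1)) := ⟨_, rfl⟩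
  rw [← hMdef]
  have hM0 : 0 < M := by
    rw [hMdef]
    exact div_pos (by nlinarith) (by nlinarith)
  obtain ⟨b, hbdef⟩ : ∃ b : ℝ, b = (γ + 2) * (2 * γ - 1) / ((γ + 1) * (2 * γ + 1)) := ⟨_, rfl⟩
  have hb0 : 0 < b := by
    rw [hbdef]
    exact div_pos (by nlinarith) (by nlinarith)
  have hb1 : b ≤ 1 := by
    rw [hbdef, div_le_one (by nlinarith)]
    nlinarith
  have hbM : c1 * c2 = b * M := by
    rw [hbdef, hMdef, hc1def, hc2def, hκdef]
    have h1 : γ - 1 ≠ 0 := by linarith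
    have h2 : γ + 1 ≠ 0 := by linarith
    have h3 : 2 * γ - 1 ≠ 0 := by nlinarith
    have h4 : 2 * γ + 1 ≠ 0 := by nlinarith
    have h5 : γ ≠ 0 := by linarith
    field_simp
    rw [mul_div_assoc, div_self (show γ * 2 - 1 ≠ 0 by contrapose! h3; linarith)]
    ring
  have hbα : b ^ α ≤ b ^ (2:ℝ) :=
    Real.rpow_le_rpow_of_exponent_ge hb0 hb1 (by linarith)
  rw [show ((2:ℝ)) = ((2:ℕ):ℝ) by norm_num, Real.rpow_natCast] at hbα
  have hpoly : (γ+2)^2*(2*γ-1)^2 ≤ 2*(γ^2*(2*γ+1)^2) := by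
    nlinarith [mul_pos (mul_pos hγ0 hγ0) (mul_pos hγ0 (sub_pos.mpr hγ))]
  have h2b : 2 * b ^ 2 ≤ κ ^ 2 := by
    have h7 : (0:ℝ) < ((γ+1)*(2*γ+1))^2 := by nlinarith
    have h8 : (0:ℝ) < (γ+1)^2 := by nlinarith
    rw [hbdef, hκdef, div_pow, div_pow, ← mul_div_assoc, div_le_div_iff₀ h7 h8]
    nlinarith [mul_le_mul_of_nonneg_left hpoly (by positivity : (0:ℝ) ≤ 2*(γ+1)^2)]
  have e : c1 ^ α * c2 ^ α = b ^ α * M ^ α := by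
    rw [← Real.mul_rpow hc10.le hc20.le, hbM, Real.mul_rpow hb0.le hM0.le]
  rw [e]
  have hMα : 0 ≤ M ^ α := Real.rpow_nonneg hM0.le _
  have h6 : 2 * b ^ α ≤ κ ^ 2 := by linarith
  calc b ^ α * M ^ α * 2 = (2 * b ^ α) * M ^ α := by ring
    _ ≤ κ ^ 2 * M ^ α := mul_le_mul_of_nonneg_right h6 hMα

lemma aux_final (α γ κ c1 c2 k rn : ℝ) (hα : 2 < α) (hγ : 1 < γ) (hrn : 0 < rn)
    (hκdef : κ = 2 * γ / (γ + 1)) (hc1def : c1 = γ / (γ - 1))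
    (hc2def : c2 = (2 * γ + κ) / (2 * γ))
    (hk : k = c1 ^ α * c2 ^ α * rn ^ (α - 2) / (π * κ ^ 2)) :
    k * (2 * π * (γ * rn) ^ (2 - α) / (α - 2)) ≤
      1 / ((α - 2) * γ ^ (α - 2)) *
        ((γ * (2 * γ + 1)) / ((γ - 1) * (2 * γ - 1))) ^ α := by
  have hγ0 : (0:ℝ) < γ := by linarith
  have hκ0 : 0 < κ := by rw [hκdef]; positivity
  have hmain := aux_ratio α γ κ c1 c2 hα hγ hκdef hc1def hc2def
  have hγα : (0:ℝ) < γ ^ (α - 2) := Real.rpow_pos_of_pos hγ0 _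
  have hrnα : (0:ℝ) < rn ^ (α - 2) := Real.rpow_pos_of_pos hrn _
  have ern : rn ^ (2 - α) = (rn ^ (α - 2))⁻¹ := by
    rw [show (2 - α) = -(α - 2) by ring, Real.rpow_neg hrn.le]
  have eγ : γ ^ (2 - α) = (γ ^ (α - 2))⁻¹ := by
    rw [show (2 - α) = -(α - 2) by ring, Real.rpow_neg hγ0.le]
  have hπ : (0:ℝ) < π := pi_pos
  have h1 : (α - 2) ≠ 0 := by linarith
  have key : k * (2 * π * (γ * rn) ^ (2 - α) / (α - 2)) =
      (c1 ^ α * c2 ^ α * 2) / (κ ^ 2 * ((α - 2) * γ ^ (α - 2))) := by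
    rw [hk, Real.mul_rpow hγ0.le hrn.le, ern, eγ]
    field_simp
  rw [key]
  have hZ : (0:ℝ) < (α - 2) * γ ^ (α - 2) := mul_pos (by linarith) hγα
  have e2 : 1 / ((α - 2) * γ ^ (α - 2)) *
        ((γ * (2 * γ + 1)) / ((γ - 1) * (2 * γ - 1))) ^ α =
      (κ ^ 2 * ((γ * (2 * γ + 1)) / ((γ - 1) * (2 * γ - 1))) ^ α) /
        (κ ^ 2 * ((α - 2) * γ ^ (α - 2))) := by
    field_simp
  rw [e2]
  gcongr

set_option maxHeartbeats 2000000 in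
lemma interference_bound (α γ : ℝ) (hα : 2 < α) (hγ : 1 < γ) (n : ℕ)
    (c : ℕ → EuclideanSpace ℝ (Fin 2)) (r p : ℕ → ℝ)
    (hr : ∀ i ≤ n, 0 < r i) (hp0 : ∀ i ≤ n, 0 ≤ p i) (hp1 : ∀ i ≤ n, p i ≤ r i ^ α)
    (hle : ∀ i ≤ n, r i ≤ r n)
    (hsep : ∀ i ≤ n, ∀ j ≤ n, i ≠ j → γ * (r i + r j) ≤ dist (c i) (c j))
    (q : EuclideanSpace ℝ (Fin 2)) (hq : dist (c n) q = r n) :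
    ∑ i ∈ Finset.range n, p i / dist (c i) q ^ α ≤
      1 / ((α - 2) * γ ^ (α - 2)) *
        ((γ * (2 * γ + 1)) / ((γ - 1) * (2 * γ - 1))) ^ α := by
  have hγ0 : (0:ℝ) < γ := by linarith
  have hrn : 0 < r n := hr n le_rfl
  have hγα : (0:ℝ) < γ ^ (α - 2) := Real.rpow_pos_of_pos hγ0 _
  have hβ0 : 0 ≤ 1 / ((α - 2) * γ ^ (α - 2)) *
      ((γ * (2 * γ + 1)) / ((γ - 1) * (2 * γ - 1))) ^ α := by
    have h2 : (0:ℝ) ≤ ((γ * (2 * γ + 1)) / ((γ - 1) * (2 * γ - 1))) ^ α :=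
      Real.rpow_nonneg (div_nonneg (by nlinarith) (by nlinarith)) _
    have h1 : (0:ℝ) ≤ 1 / ((α - 2) * γ ^ (α - 2)) :=
      le_of_lt (one_div_pos.mpr (mul_pos (by linarith) hγα))
    exact mul_nonneg h1 h2
  -- constants
  obtain ⟨κ, hκdef⟩ : ∃ κ : ℝ, κ = 2 * γ / (γ + 1) := ⟨_, rfl⟩
  have hκ0 : 0 < κ := by rw [hκdef]; positivity
  have hκγ : κ ≤ γ := by
    rw [hκdef, div_le_iff₀ (by linarith)]
    nlinarith
  obtain ⟨c1, hc1def⟩ : ∃ c1 : ℝ, c1 = γ / (γ - 1) := ⟨_, rfl⟩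
  obtain ⟨c2, hc2def⟩ : ∃ c2 : ℝ, c2 = (2 * γ + κ) / (2 * γ) := ⟨_, rfl⟩
  have hc10 : 0 < c1 := by rw [hc1def]; exact div_pos (by linarith) (by linarith)
  have hc20 : 0 < c2 := by rw [hc2def]; exact div_pos (by linarith) (by linarith)
  obtain ⟨k, hkdef⟩ : ∃ k : ℝ, k = c1 ^ α * c2 ^ α * r n ^ (α - 2) / (π * κ ^ 2) := ⟨_, rfl⟩
  have hrnα2 : (0:ℝ) < r n ^ (α - 2) := Real.rpow_pos_of_pos hrn _
  have hc1α : (0:ℝ) < c1 ^ α := Real.rpow_pos_of_pos hc10 _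
  have hc2α : (0:ℝ) < c2 ^ α := Real.rpow_pos_of_pos hc20 _
  have hk0 : 0 ≤ k := by
    rw [hkdef]
    exact le_of_lt (div_pos (mul_pos (mul_pos hc1α hc2α) hrnα2)
      (mul_pos pi_pos (pow_pos hκ0 2)))
  obtain ⟨f, hfdef⟩ : ∃ f : EuclideanSpace ℝ (Fin 2) → ℝ≥0∞,
      f = fun x => ENNReal.ofReal (dist x (c n) ^ (-α)) := ⟨_, rfl⟩
  obtain ⟨B, hBdef⟩ : ∃ B : ℕ → Set (EuclideanSpace ℝ (Fin 2)),
      B = fun i => Metric.closedBall (c i) (κ * r i) := ⟨_, rfl⟩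
  have hBmeas : ∀ i, MeasurableSet (B i) := by
    intro i; simp only [hBdef]; exact measurableSet_closedBall
  -- Step 1: term bound
  have step1 : ∀ i ∈ Finset.range n,
      ENNReal.ofReal (p i / dist (c i) q ^ α) ≤
        ENNReal.ofReal k * ∫⁻ x in B i, f x := by
    intro i hi
    rw [Finset.mem_range] at hi
    have hin : i ≤ n := hi.le
    have hine : i ≠ n := Nat.ne_of_lt hi
    have hri : 0 < r i := hr i hin
    obtain ⟨d, hddef⟩ : ∃ d : ℝ, d = dist (c i) q := ⟨_, rfl⟩
    obtain ⟨D, hDdef⟩ : ∃ D : ℝ, D = dist (c i) (c n) := ⟨_, rfl⟩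
    have hD : γ * (r i + r n) ≤ D := by rw [hDdef]; exact hsep i hin n le_rfl hine
    have hDpos : 0 < D := lt_of_lt_of_le (by positivity) hD
    have htri : D ≤ d + r n := by
      rw [hDdef, hddef, ← hq]
      calc dist (c i) (c n) ≤ dist (c i) q + dist q (c n) := dist_triangle _ _ _
        _ = dist (c i) q + dist (c n) q := by rw [dist_comm q (c n)]
    have hrnD : γ * r n ≤ D := le_trans (by nlinarith) hD
    have hriD : 2 * γ * r i ≤ D := le_trans (by nlinarith [hle i hin]) hD
    have hdD : D ≤ c1 * d := by
      have e : c1 * d = γ * d / (γ - 1) := by rw [hc1def]; ring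
      rw [e, le_div_iff₀ (by linarith)]
      nlinarith [mul_le_mul_of_nonneg_left (show D - r n ≤ d by linarith) hγ0.le]
    have hdpos : 0 < d := by nlinarith
    have hDκ : D + κ * r i ≤ c2 * D := by
      have e : c2 * D = (2 * γ + κ) * D / (2 * γ) := by rw [hc2def]; ring
      rw [e, le_div_iff₀ (by linarith)]
      nlinarith [mul_nonneg hκ0.le (sub_nonneg.mpr hriD)]
    have hDκpos : 0 < D + κ * r i := by positivity
    have hreal : p i / d ^ α ≤ k * (π * κ ^ 2 * r i ^ 2) * (D + κ * r i) ^ (-α) :=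
      aux_term α (p i) (r i) (r n) d D c1 c2 κ k hα hri hrn hκ0 hc10 hc20
        (hp1 i hin) (hle i hin) hdD hDκ hdpos hDpos hkdef
    -- lintegral lower bound on B i
    have hlow : ENNReal.ofReal ((D + κ * r i) ^ (-α)) * ENNReal.ofReal (π * (κ * r i) ^ 2)
        ≤ ∫⁻ x in B i, f x := by
      have hvol : volume (B i) = ENNReal.ofReal (π * (κ * r i) ^ 2) := by
        simp only [hBdef]
        rw [EuclideanSpace.volume_closedBall, Fintype.card_fin]
        norm_num
        rw [← ENNReal.ofReal_pow (Real.sqrt_nonneg _), Real.sq_sqrt pi_pos.le, ← ENNReal.ofReal_pow (by positivity),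
          ← ENNReal.ofReal_mul (by positivity), mul_comm]
      calc ENNReal.ofReal ((D + κ * r i) ^ (-α)) * ENNReal.ofReal (π * (κ * r i) ^ 2)
          = ∫⁻ _ in B i, ENNReal.ofReal ((D + κ * r i) ^ (-α)) := by
            rw [setLIntegral_const, hvol]
        _ ≤ ∫⁻ x in B i, f x := by
            apply setLIntegral_mono' (hBmeas i)
            intro x hx
            simp only [hBdef] at hx
            simp only [hfdef]
            apply ENNReal.ofReal_le_ofReal
            have hxd : dist x (c i) ≤ κ * r i := mem_closedBall.mp hx
            have hub : dist x (c n) ≤ D + κ * r i := by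
              calc dist x (c n) ≤ dist x (c i) + dist (c i) (c n) := dist_triangle _ _ _
                _ ≤ κ * r i + D := by rw [← hDdef]; linarith
                _ = D + κ * r i := by ring
            have hlb : 0 < dist x (c n) := by
              have h5 : D ≤ dist (c i) x + dist x (c n) := by
                rw [hDdef]; exact dist_triangle _ _ _
              rw [dist_comm (c i) x] at h5
              nlinarith [mul_le_mul_of_nonneg_right hκγ hri.le]
            exact Real.rpow_le_rpow_of_nonpos hlb hub (by linarith)
    calc ENNReal.ofReal (p i / dist (c i) q ^ α)
        ≤ ENNReal.ofReal (k * (π * κ ^ 2 * r i ^ 2) * (D + κ * r i) ^ (-α)) := by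
          rw [← hddef]; exact ENNReal.ofReal_le_ofReal hreal
      _ = ENNReal.ofReal k * (ENNReal.ofReal ((D + κ * r i) ^ (-α)) *
            ENNReal.ofReal (π * (κ * r i) ^ 2)) := by
          rw [← ENNReal.ofReal_mul (by positivity), ← ENNReal.ofReal_mul hk0]
          congr 1
          ring
      _ ≤ ENNReal.ofReal k * ∫⁻ x in B i, f x :=
          mul_le_mul_right hlow _
  -- Step 2: disjointness and inclusion
  have hBdisj : (↑(Finset.range n) : Set ℕ).PairwiseDisjoint B := by
    intro i hi j hj hij
    simp only [Finset.coe_range, mem_Iio] at hi hj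
    have hs := hsep i hi.le j hj.le hij
    have hri := hr i hi.le
    have hrj := hr j hj.le
    have hlt : κ * r i + κ * r j < dist (c i) (c j) := by
      have hκγ' : κ < γ := by
        rw [hκdef, div_lt_iff₀ (by linarith)]
        nlinarith
      nlinarith [mul_lt_mul_of_pos_right hκγ' (show (0:ℝ) < r i + r j by linarith)]
    simp only [hBdef, Function.onFun]
    exact Metric.closedBall_disjoint_closedBall hlt
  have hBsub : ∀ i ∈ Finset.range n, B i ⊆ {x | γ * r n ≤ dist x (c n)} := by
    intro i hi x hx
    rw [Finset.mem_range] at hi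
    have hin : i ≤ n := hi.le
    have hri : 0 < r i := hr i hin
    have hD : γ * (r i + r n) ≤ dist (c i) (c n) := hsep i hin n le_rfl (Nat.ne_of_lt hi)
    simp only [hBdef] at hx
    have hxd : dist x (c i) ≤ κ * r i := mem_closedBall.mp hx
    have h5 : dist (c i) (c n) ≤ dist (c i) x + dist x (c n) := dist_triangle _ _ _
    rw [dist_comm (c i) x] at h5
    show γ * r n ≤ dist x (c n)
    nlinarith [mul_le_mul_of_nonneg_right hκγ hri.le]
  -- Step 3: sum the integrals
  have step3 : ∑ i ∈ Finset.range n, ∫⁻ x in B i, f x ≤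
      ENNReal.ofReal (2 * π * (γ * r n) ^ (2 - α) / (α - 2)) := by
    rw [← lintegral_biUnion_finset hBdisj (fun i _ => hBmeas i)]
    simp only [hfdef]
    refine le_trans (lintegral_mono_set ?_) (annulus_bound α (γ * r n) hα (by positivity) (c n))
    exact iUnion₂_subset hBsub
  -- Step 4: combine
  have hsum : ENNReal.ofReal (∑ i ∈ Finset.range n, p i / dist (c i) q ^ α) ≤
      ENNReal.ofReal (1 / ((α - 2) * γ ^ (α - 2)) *
        ((γ * (2 * γ + 1)) / ((γ - 1) * (2 * γ - 1))) ^ α) := by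
    rw [ENNReal.ofReal_sum_of_nonneg (fun i hi =>
      div_nonneg (hp0 i (Finset.mem_range.mp hi).le) (Real.rpow_nonneg dist_nonneg _))]
    calc ∑ i ∈ Finset.range n, ENNReal.ofReal (p i / dist (c i) q ^ α)
        ≤ ∑ i ∈ Finset.range n, ENNReal.ofReal k * ∫⁻ x in B i, f x :=
          Finset.sum_le_sum step1
      _ = ENNReal.ofReal k * ∑ i ∈ Finset.range n, ∫⁻ x in B i, f x := by
          rw [Finset.mul_sum]
      _ ≤ ENNReal.ofReal k * ENNReal.ofReal (2 * π * (γ * r n) ^ (2 - α) / (α - 2)) :=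
          mul_le_mul_right step3 _
      _ ≤ ENNReal.ofReal (1 / ((α - 2) * γ ^ (α - 2)) *
            ((γ * (2 * γ + 1)) / ((γ - 1) * (2 * γ - 1))) ^ α) := by
          rw [← ENNReal.ofReal_mul hk0]
          exact ENNReal.ofReal_le_ofReal
            (aux_final α γ κ c1 c2 k (r n) hα hγ hrn hκdef hc1def hc2def hkdef)
  exact (ENNReal.ofReal_le_ofReal_iff hβ0).mp hsum

theorem stmt_6 (α γ : ℝ) (hα : 2 < α) (hγ : 1 < γ) (n : ℕ)
    (c : ℕ → EuclideanSpace ℝ (Fin 2)) (r p : ℕ → ℝ)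
    (hr : ∀ i ≤ n, 0 < r i) (hp0 : ∀ i ≤ n, 0 ≤ p i) (hp1 : ∀ i ≤ n, p i ≤ r i ^ α)
    (hle : ∀ i ≤ n, r i ≤ r n)
    (hdisj : ∀ i ≤ n, ∀ j ≤ n, i ≠ j →
      Disjoint (Metric.closedBall (c i) (r i)) (Metric.closedBall (c j) (r j)))
    (hsep : ∀ i ≤ n, ∀ j ≤ n, i ≠ j → γ * (r i + r j) ≤ dist (c i) (c j))
    (q : EuclideanSpace ℝ (Fin 2)) (hq : dist (c n) q = r n)
    (hpow : 1 ≤ ∑ i ∈ Finset.range (n + 1), p i / dist (c i) q ^ α) :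
    (1 - 1 / ((α - 2) * γ ^ (α - 2)) *
        ((γ * (2 * γ + 1)) / ((γ - 1) * (2 * γ - 1))) ^ α) * r n ^ α ≤ p n := by
  have hrn : 0 < r n := hr n le_rfl
  have hkey := interference_bound α γ hα hγ n c r p hr hp0 hp1 hle hsep q hq
  rw [Finset.sum_range_succ, hq] at hpow
  have hrnα : 0 < r n ^ α := Real.rpow_pos_of_pos hrn _
  have h1 : 1 - 1 / ((α - 2) * γ ^ (α - 2)) *
      ((γ * (2 * γ + 1)) / ((γ - 1) * (2 * γ - 1))) ^ α ≤ p n / r n ^ α := by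
    linarith
  calc (1 - 1 / ((α - 2) * γ ^ (α - 2)) *
        ((γ * (2 * γ + 1)) / ((γ - 1) * (2 * γ - 1))) ^ α) * r n ^ α
      ≤ (p n / r n ^ α) * r n ^ α := mul_le_mul_of_nonneg_right h1 hrnα.le
    _ = p n := div_mul_cancel₀ _ (ne_of_gt hrnα)
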